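/- Let M be the differential operator M(y) = (x²−1)y'' + (x − 2p(x²−1))y' + (p²(x²−1) − px − n²)y over K = ℚ(n,p). If y ∈ K(x) is a rational function such that M(y) is a polynomial in K[x], then y itself is a polynomial in K[x]. -/

import Mathlib

open Polynomial

/-- The derivative of a rational function, `(p/q)' = (p'q − pq')/q²`. -/
noncomputable def ratDeriv {K : Type*} [Field K] (f : RatFunc K) : RatFunc K :=
  (algebraMap K[X] (RatFunc K) (derivative f.num) * algebraMap K[X] (RatFunc K) f.denom -
      algebraMap K[X] (RatFunc K) f.num * algebraMap K[X] (RatFunc K) (derivative f.denom)) /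
    algebraMap K[X] (RatFunc K) (f.denom ^ 2)

/-- The action of the differential operator `M = ∑_{i=0}^r pᵢ ∂ⁱ` (with polynomial
coefficients `pᵢ`) on a rational function. -/
noncomputable def applyOp {K : Type*} [Field K] (r : ℕ) (p : ℕ → K[X]) (f : RatFunc K) :
    RatFunc K :=
  ∑ i ∈ Finset.range (r + 1), algebraMap K[X] (RatFunc K) (p i) * ratDeriv^[i] f

/-- `f` has no pole at `α`. -/
def regAt {K : Type*} [Field K] (α : K) (f : RatFunc K) : Prop :=
  Polynomial.eval α f.denom ≠ 0

/-- `ord_α f ≥ m` : the valuation of `f` at `α` (as a Laurent series in `x − α`)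
is at least `m`. -/
def ordGe {K : Type*} [Field K] (α : K) (m : ℤ) (f : RatFunc K) : Prop :=
  regAt α ((RatFunc.X - RatFunc.C α) ^ (-m) * f)

/-- `f` has degree (order at infinity, negated) at most `m`, i.e. `ord_∞ f ≥ −m`. -/
def degLe {K : Type*} [Field K] (m : ℤ) (f : RatFunc K) : Prop :=
  f = 0 ∨ RatFunc.intDegree f ≤ m

/-- The field `K = ℚ(n, p)` of rational functions in two indeterminates. -/
noncomputable abbrev Knp : Type := RatFunc (RatFunc ℚ)

/-- The indeterminate `n`. -/
noncomputable def nn : Knp := RatFunc.C RatFunc.X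

/-- The indeterminate `p`. -/
noncomputable def pp : Knp := RatFunc.X

/-- Coefficients of the operator
`M(y) = (x²−1)y'' + (x − 2p(x²−1))y' + (p²(x²−1) − px − n²)y`. -/
noncomputable def MnpCoeff : ℕ → Knp[X]
  | 0 => C (pp ^ 2) * (X ^ 2 - 1) - C pp * X - C (nn ^ 2)
  | 1 => X - C (2 * pp) * (X ^ 2 - 1)
  | 2 => X ^ 2 - 1
  | _ => 0

lemma ratDeriv_div {K : Type*} [Field K] (a b : K[X]) (hb : b ≠ 0) :
    ratDeriv (algebraMap K[X] (RatFunc K) a / algebraMap K[X] (RatFunc K) b)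
      = algebraMap K[X] (RatFunc K) (derivative a * b - a * derivative b) /
        algebraMap K[X] (RatFunc K) (b ^ 2) := by
  set φ := algebraMap K[X] (RatFunc K) with hφ
  have hinj : Function.Injective φ := RatFunc.algebraMap_injective K
  set f : RatFunc K := φ a / φ b with hf
  have hd0 : f.denom ≠ 0 := f.denom_ne_zero
  have hbφ : φ b ≠ 0 := fun h => hb (hinj (by simpa using h))
  have hdφ : φ f.denom ≠ 0 := fun h => hd0 (hinj (by simpa using h))
  have e : φ a / φ b = φ f.num / φ f.denom := (f.num_div_denom).symm
  rw [div_eq_div_iff hbφ hdφ] at e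
  have h1 : a * f.denom = f.num * b := hinj (by rw [map_mul, map_mul]; exact e)
  have h2 : derivative a * f.denom + a * derivative f.denom
      = derivative f.num * b + f.num * derivative b := by
    have := congrArg derivative h1
    simpa [derivative_mul] using this
  rw [ratDeriv]
  rw [div_eq_div_iff (by rw [map_pow]; exact pow_ne_zero 2 hdφ)
    (by rw [map_pow]; exact pow_ne_zero 2 hbφ)]
  simp only [← map_mul, ← map_sub, ← map_pow]
  simp only [← hφ, ← map_mul]
  refine congrArg φ ?_
  linear_combination (-(b * f.denom)) * h2 + (derivative b * f.denom + b * derivative f.denom) * h1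

/-- Key identity: writing `y.denom = r^(k+1) * u`, if `applyOp 2 p y = q` then a certain
polynomial identity holds. -/
lemma key {K : Type*} [Field K] (p : ℕ → K[X]) (y : RatFunc K) (q r u : K[X]) (k : ℕ)
    (hq : applyOp 2 p y = algebraMap K[X] (RatFunc K) q) (hb : y.denom = r ^ (k + 1) * u) :
    ∃ C₁ C₂ : K[X],
      C₁ = r * (derivative y.num * u - y.num * derivative u)
            - ((k : K[X]) + 1) * y.num * u * derivative r ∧
      C₂ = r * (u ^ 2 * derivative C₁ - 2 * C₁ * u * derivative u)
            - ((k : K[X]) + 2) * derivative r * C₁ * u ^ 2 ∧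
      p 2 * C₂ + r * p 1 * C₁ * u ^ 2 + r ^ 2 * p 0 * y.num * u ^ 3
        = r ^ (k + 3) * q * u ^ 4 := by
  set φ := algebraMap K[X] (RatFunc K) with hφ
  have hinj : Function.Injective φ := RatFunc.algebraMap_injective K
  set a := y.num with ha
  set b := y.denom with hbd
  have hb0 : b ≠ 0 := y.denom_ne_zero
  have hr0 : r ≠ 0 := by rintro rfl; exact hb0 (by simp [hb])
  have hpow : ∀ (s : K[X]) (m : ℕ), derivative (s ^ (m + 1)) = ((m : K[X]) + 1) * s ^ m * derivative s := by
    intro s m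
    rw [derivative_pow]
    simp only [Nat.add_sub_cancel, Polynomial.C_eq_natCast]
    push_cast
    ring
  have hbφ : φ b ≠ 0 := fun h => hb0 (hinj (by simpa using h))
  -- derivatives
  set A₁ : K[X] := derivative a * b - a * derivative b with hA₁def
  set A₂ : K[X] := derivative A₁ * b ^ 2 - A₁ * derivative (b ^ 2) with hA₂def
  have hy : y = φ a / φ b := (y.num_div_denom).symm
  have hd1 : ratDeriv y = φ A₁ / φ (b ^ 2) := by rw [hy]; exact ratDeriv_div a b hb0
  have hd2 : ratDeriv (ratDeriv y) = φ A₂ / φ ((b ^ 2) ^ 2) := by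
    rw [hd1]; exact ratDeriv_div A₁ (b ^ 2) (pow_ne_zero 2 hb0)
  have expand : φ (p 0) * (φ a / φ b) + φ (p 1) * (φ A₁ / φ (b ^ 2))
      + φ (p 2) * (φ A₂ / φ ((b ^ 2) ^ 2)) = φ q := by
    rw [← hy, ← hd1, ← hd2, ← hq, applyOp]
    rw [Finset.sum_range_succ, Finset.sum_range_succ, Finset.sum_range_one]
    simp [Function.iterate_succ_apply', hφ]
    try ring
  have poly : p 0 * a * b ^ 3 + p 1 * A₁ * b ^ 2 + p 2 * A₂ = q * b ^ 4 := by
    have poly' : (p 0 * a * b ^ 3 + p 1 * A₁ * b ^ 2 + p 2 * A₂) * b ^ 3 = q * b ^ 4 * b ^ 3 := by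
      apply hinj
      simp only [map_add, map_mul, map_pow]
      simp only [map_pow] at expand ⊢
      rw [← expand]
      field_simp
    exact mul_right_cancel₀ (pow_ne_zero 3 hb0) poly'
  -- now substitute b = r^(k+1) u
  set C₁ : K[X] := r * (derivative a * u - a * derivative u)
      - ((k : K[X]) + 1) * a * u * derivative r with hC₁def
  set C₂ : K[X] := r * (u ^ 2 * derivative C₁ - 2 * C₁ * u * derivative u)
      - ((k : K[X]) + 2) * derivative r * C₁ * u ^ 2 with hC₂def
  refine ⟨C₁, C₂, hC₁def, hC₂def, ?_⟩
  have hdb : derivative b = ((k : K[X]) + 1) * r ^ k * derivative r * u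
      + r ^ (k + 1) * derivative u := by
    rw [hb, derivative_mul, hpow]
    try ring
  have hA₁ : A₁ = r ^ k * C₁ := by
    rw [hA₁def, hdb, hb, hC₁def]; ring
  have h5 : A₁ * r = r ^ (k + 1) * C₁ := by rw [hA₁]; ring
  have h6 := congrArg derivative h5
  rw [derivative_mul, derivative_mul, hpow] at h6
  have hA₁' : derivative A₁ * r = r ^ k * ((k : K[X]) * derivative r * C₁ + r * derivative C₁) := by
    linear_combination h6 - derivative r * hA₁
  have hdb2 : derivative (b ^ 2) = 2 * b * derivative b := by
    rw [show b ^ 2 = b * b by ring, derivative_mul]; ring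
  have hA₂ : A₂ = r ^ (3 * k + 1) * C₂ := by
    have h7 : A₂ * r = r ^ (3 * k + 1) * C₂ * r := by
      have : A₂ * r = (derivative A₁ * r) * b ^ 2 - A₁ * (2 * b * derivative b) * r := by
        rw [hA₂def, hdb2]; ring
      rw [this, hA₁', hA₁, hdb, hb, hC₂def]
      ring
    exact mul_right_cancel₀ hr0 h7
  have h8 : r ^ (3 * k + 1) * (p 2 * C₂ + r * p 1 * C₁ * u ^ 2 + r ^ 2 * p 0 * a * u ^ 3)
      = r ^ (3 * k + 1) * (r ^ (k + 3) * q * u ^ 4) := by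
    rw [hA₁, hA₂, hb] at poly
    linear_combination poly
  exact mul_left_cancel₀ (pow_ne_zero _ hr0) h8

-- AUXILIARY LEMMAS

instance ratFuncCharZero {K : Type*} [CommRing K] [IsDomain K] [CharZero K] :
    CharZero (RatFunc K) :=
  charZero_of_injective_algebraMap (RatFunc.algebraMap_injective K)

lemma aux_not_dvd_C {K : Type*} [Field K] {r : K[X]} (hp : Prime r) {c : K} (hc : c ≠ 0) :
    ¬ r ∣ C c :=
  fun h => hp.not_unit (isUnit_of_dvd_unit h (isUnit_C.mpr (isUnit_iff_ne_zero.mpr hc)))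

lemma aux_cast_one {K : Type*} [Field K] (k : ℕ) :
    ((k : K[X]) + 1) = C ((k : K) + 1) := by
  rw [map_add, Polynomial.C_eq_natCast, map_one]

lemma aux_cast_two {K : Type*} [Field K] (k : ℕ) :
    ((k : K[X]) + 2) = C ((k : K) + 2) := by
  rw [map_add, Polynomial.C_eq_natCast, map_ofNat]

/-- If `r` is irreducible and divides the denominator of `y`, then `r` does not divide
`C₁`. -/
lemma aux_not_dvd_C1 {K : Type*} [Field K] [CharZero K] (y : RatFunc K) {r u : K[X]} (k : ℕ)
    (hp : Prime r) (hra : ¬ r ∣ y.num) (hu : ¬ r ∣ u) (hrdr : ¬ r ∣ derivative r)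
    {C₁ : K[X]}
    (hC₁ : C₁ = r * (derivative y.num * u - y.num * derivative u)
      - ((k : K[X]) + 1) * y.num * u * derivative r) :
    ¬ r ∣ C₁ := by
  intro hd
  have h1 : r ∣ ((k : K[X]) + 1) * y.num * u * derivative r := by
    have heq : ((k : K[X]) + 1) * y.num * u * derivative r
        = r * (derivative y.num * u - y.num * derivative u) - C₁ := by rw [hC₁]; ring
    rw [heq]; exact dvd_sub (dvd_mul_right r _) hd
  rcases hp.dvd_mul.mp h1 with h2 | h2
  · rcases hp.dvd_mul.mp h2 with h3 | h3
    · rcases hp.dvd_mul.mp h3 with h4 | h4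
      · refine aux_not_dvd_C hp (Nat.cast_add_one_ne_zero k) (by rwa [aux_cast_one k] at h4)
      · exact hra h4
    · exact hu h3
  · exact hrdr h2

/-- First localization step: any irreducible factor of the denominator divides `x² − 1`. -/
lemma aux_L1 (y : RatFunc Knp) (q : Knp[X]) (hq : applyOp 2 MnpCoeff y = algebraMap Knp[X] (RatFunc Knp) q)
    (r : Knp[X]) (hirr : Irreducible r) (hrb : r ∣ y.denom) :
    r ∣ (X - 1 : Knp[X]) ∨ r ∣ (X + 1 : Knp[X]) := by
  have hp : Prime r := hirr.prime
  obtain ⟨n, u, hu, hbn⟩ := WfDvdMonoid.max_power_factor y.denom_ne_zero hirr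
  have hn : n ≠ 0 := by
    rintro rfl
    rw [pow_zero, one_mul] at hbn
    exact hu (hbn ▸ hrb)
  obtain ⟨k, rfl⟩ : ∃ k, n = k + 1 := ⟨n - 1, by omega⟩
  obtain ⟨C₁, C₂, hC₁, hC₂, hS⟩ := key MnpCoeff y q r u k hq hbn
  have hr0 : r ≠ 0 := hp.ne_zero
  have hra : ¬ r ∣ y.num := fun hd => hp.not_unit (y.isCoprime_num_denom.isUnit_of_dvd' hd hrb)
  have hdr0 : derivative r ≠ 0 := by
    intro hzero
    have h1 := natDegree_eq_zero_of_derivative_eq_zero hzero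
    have h2 := hirr.natDegree_pos
    omega
  have hrdr : ¬ r ∣ derivative r := fun hd =>
    absurd (degree_le_of_dvd hd hdr0) (not_le.mpr (degree_derivative_lt hr0))
  have hrC₁ : ¬ r ∣ C₁ := aux_not_dvd_C1 y k hp hra hu hrdr hC₁
  have hdvd : r ∣ MnpCoeff 2 * (((k : Knp[X]) + 2) * derivative r * C₁ * u ^ 2) := by
    have h1 : r ∣ MnpCoeff 2 * C₂ + r * MnpCoeff 1 * C₁ * u ^ 2
        + r ^ 2 * MnpCoeff 0 * y.num * u ^ 3 := by
      rw [hS]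
      exact Dvd.dvd.mul_right (Dvd.dvd.mul_right (dvd_pow_self r (by omega)) _) _
    have h2 : r ∣ MnpCoeff 2 * C₂ := by
      have heq : MnpCoeff 2 * C₂ = (MnpCoeff 2 * C₂ + r * MnpCoeff 1 * C₁ * u ^ 2
          + r ^ 2 * MnpCoeff 0 * y.num * u ^ 3)
          - r * (MnpCoeff 1 * C₁ * u ^ 2 + r * MnpCoeff 0 * y.num * u ^ 3) := by ring
      rw [heq]; exact dvd_sub h1 (dvd_mul_right r _)
    have h3 : MnpCoeff 2 * (((k : Knp[X]) + 2) * derivative r * C₁ * u ^ 2)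
        = r * (MnpCoeff 2 * (u ^ 2 * derivative C₁ - 2 * C₁ * u * derivative u))
          - MnpCoeff 2 * C₂ := by rw [hC₂]; ring
    rw [h3]; exact dvd_sub (dvd_mul_right r _) h2
  rcases hp.dvd_mul.mp hdvd with hM | h
  · have hM2 : MnpCoeff 2 = (X - 1) * (X + 1) := by
      show (X ^ 2 - 1 : Knp[X]) = _; ring
    rw [hM2] at hM
    exact hp.dvd_mul.mp hM
  · exfalso
    rcases hp.dvd_mul.mp h with h | h
    · rcases hp.dvd_mul.mp h with h | h
      · rcases hp.dvd_mul.mp h with h | h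
        · have hc : ((k : Knp) + 2) ≠ 0 := by
            have h0 : (((k + 2 : ℕ)) : Knp) ≠ 0 := Nat.cast_ne_zero.mpr (by omega)
            push_cast at h0; exact h0
          exact aux_not_dvd_C hp hc (by rwa [aux_cast_two k] at h)
        · exact hrdr h
      · exact hrC₁ h
    · exact hu (hp.dvd_of_dvd_pow h)

/-- Second localization step: `x − α` with `α² = 1` does not divide the denominator. -/
lemma aux_L2 (y : RatFunc Knp) (q : Knp[X])
    (hq : applyOp 2 MnpCoeff y = algebraMap Knp[X] (RatFunc Knp) q)
    (α : Knp) (hα : α ^ 2 = 1) : ¬ (X - C α) ∣ y.denom := by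
  intro hrb
  set r : Knp[X] := X - C α with hr
  have hirr : Irreducible r := irreducible_X_sub_C α
  have hp : Prime r := hirr.prime
  have hr0 : r ≠ 0 := hp.ne_zero
  have hdr : derivative r = 1 := by rw [hr]; simp
  obtain ⟨n, u, hu, hbn⟩ := WfDvdMonoid.max_power_factor y.denom_ne_zero hirr
  have hn : n ≠ 0 := by
    rintro rfl
    rw [pow_zero, one_mul] at hbn
    exact hu (hbn ▸ hrb)
  obtain ⟨k, rfl⟩ : ∃ k, n = k + 1 := ⟨n - 1, by omega⟩
  obtain ⟨C₁, C₂, hC₁, hC₂, hS⟩ := key MnpCoeff y q r u k hq hbn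
  have hra : ¬ r ∣ y.num := fun hd => hp.not_unit (y.isCoprime_num_denom.isUnit_of_dvd' hd hrb)
  have hrdr : ¬ r ∣ derivative r := by
    rw [hdr]; exact fun hd => hp.not_unit (isUnit_of_dvd_one hd)
  have hrC₁ : ¬ r ∣ C₁ := aux_not_dvd_C1 y k hp hra hu hrdr hC₁
  have hα0 : α ≠ 0 := by rintro rfl; norm_num at hα
  have hCα : (C α) ^ 2 = (1 : Knp[X]) := by rw [← map_pow, hα, map_one]
  have h2α : (C (2 * α) : Knp[X]) = 2 * C α := by rw [map_mul, map_ofNat]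
  have hP₂ : MnpCoeff 2 = r * (r + C (2 * α)) := by
    show (X ^ 2 - 1 : Knp[X]) = _
    rw [hr, h2α]
    linear_combination hCα
  have hP₁ : MnpCoeff 1 = r * (1 - C (2 * pp) * (r + C (2 * α))) + C α := by
    show (X - C (2 * pp) * (X ^ 2 - 1) : Knp[X]) = _
    have hP₂' : (X ^ 2 - 1 : Knp[X]) = r * (r + C (2 * α)) := hP₂
    rw [hP₂', hr]
    ring
  rw [hP₂] at hS
  have h9 : r * ((r + C (2 * α)) * C₂ + MnpCoeff 1 * C₁ * u ^ 2
        + r * MnpCoeff 0 * y.num * u ^ 3)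
      = r * (r ^ (k + 2) * q * u ^ 4) := by linear_combination hS
  have h10 := mul_left_cancel₀ hr0 h9
  have hrhs : r ∣ r ^ (k + 2) * q * u ^ 4 :=
    Dvd.dvd.mul_right (Dvd.dvd.mul_right (dvd_pow_self r (by omega)) _) _
  rw [hdr] at hC₂
  have hE : r ∣ C (α - 2 * α * ((k : Knp) + 2)) * (C₁ * u ^ 2) := by
    have hcc : (C (α - 2 * α * ((k : Knp) + 2)) : Knp[X])
        = C α - C (2 * α) * ((k : Knp[X]) + 2) := by
      rw [map_sub, map_mul, map_mul, aux_cast_two k, map_ofNat]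
    have heq : C (α - 2 * α * ((k : Knp) + 2)) * (C₁ * u ^ 2)
        = ((r + C (2 * α)) * C₂ + MnpCoeff 1 * C₁ * u ^ 2 + r * MnpCoeff 0 * y.num * u ^ 3)
          - r * ((r + C (2 * α)) * (u ^ 2 * derivative C₁ - 2 * C₁ * u * derivative u)
            + (1 - C (2 * pp) * (r + C (2 * α))) * (C₁ * u ^ 2)
            + MnpCoeff 0 * y.num * u ^ 3
            - ((k : Knp[X]) + 2) * (C₁ * u ^ 2)) := by
      rw [hcc, hC₂, hP₁]; ring
    rw [heq, h10]
    exact dvd_sub hrhs (dvd_mul_right r _)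
  have hc0 : α - 2 * α * ((k : Knp) + 2) ≠ 0 := by
    have h23 : ((2 * k + 3 : ℕ) : Knp) ≠ 0 := Nat.cast_ne_zero.mpr (by omega)
    intro h
    apply h23
    push_cast
    have hm : α * (2 * (k : Knp) + 3) = 0 := by linear_combination -h
    rcases mul_eq_zero.mp hm with h' | h'
    · exact absurd h' hα0
    · exact h'
  rcases hp.dvd_mul.mp hE with h | h
  · exact aux_not_dvd_C hp hc0 h
  · rcases hp.dvd_mul.mp h with h | h
    · exact hrC₁ h
    · exact hu (hp.dvd_of_dvd_pow h)

/-- if `y ∈ K(x)` is a rational function such that `M(y)` is a polynomial,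
then `y` is itself a polynomial. -/
theorem Mnp_polynomial_preimage (y : RatFunc Knp)
    (h : ∃ q : Knp[X], applyOp 2 MnpCoeff y = algebraMap Knp[X] (RatFunc Knp) q) :
    ∃ q : Knp[X], y = algebraMap Knp[X] (RatFunc Knp) q := by
  obtain ⟨q, hq⟩ := h
  suffices hden : y.denom = 1 by
    exact ⟨y.num, by conv_lhs => rw [← y.num_div_denom, hden, map_one, div_one]⟩
  by_contra hne
  have hnu : ¬ IsUnit y.denom := fun hisu => hne ((y.monic_denom).eq_one_of_isUnit hisu)
  obtain ⟨r, hirr, hrb⟩ := WfDvdMonoid.exists_irreducible_factor hnu y.denom_ne_zero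
  have hXb : ∀ α : Knp, α ^ 2 = 1 → r ∣ (X - C α) → False := by
    intro α hα hrd
    obtain ⟨s, hs⟩ := hrd
    rcases (irreducible_X_sub_C α).isUnit_or_isUnit hs with hiu | hiu
    · exact hirr.not_isUnit hiu
    · obtain ⟨v, hv⟩ := isUnit_iff_exists_inv.mp hiu
      have hdvd : (X - C α) ∣ r := ⟨v, by rw [hs, mul_assoc, hv, mul_one]⟩
      exact aux_L2 y q hq α hα (hdvd.trans hrb)
  rcases aux_L1 y q hq r hirr hrb with hd | hd
  · exact hXb 1 (one_pow 2) (by rwa [map_one])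
  · exact hXb (-1) (by ring) (by rwa [map_neg, map_one, sub_neg_eq_add])
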